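/- With F_{n,k}(z,q) = (1 − z² q^{2k+1}) [n choose k]_q (zq;q)_n z^k q^{k²} / (z² q^{k+1};q)_{n+1}, for all n ≥ 1 and all k: F_{n,k}(z,q) = (1 − zq^n)/(1 − z²q^{n+1}) · F_{n−1,k}(z,q) + (1 − zq) z q^n/(1 − z²q^{n+1}) · F_{n−1,k−1}(zq, q), with F_{n,k} = 0 if k < 0 or k > n. -/

import Mathlib

/-- The q-shifted factorial `(x;q)_n`. -/
def qPoch {K : Type*} [Field K] (q x : K) (n : ℕ) : K :=
  ∏ j ∈ Finset.range n, (1 - x * q ^ j)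

/-- The Gaussian binomial coefficient `[N choose k]_q` with integer arguments,
zero outside the range `0 ≤ k ≤ N`. -/
def qBinomZ {K : Type*} [Field K] (q : K) (N k : ℤ) : K :=
  if 0 ≤ k ∧ k ≤ N then
    qPoch q q N.toNat / (qPoch q q k.toNat * qPoch q q (N - k).toNat)
  else 0

/-- The summand `F_{n,k}(z,q) = (1 − z²q^{2k+1}) [n,k]_q (zq;q)_n z^k q^{k²} / (z²q^{k+1};q)_{n+1}`;
it vanishes for `k < 0` or `k > n` via the convention on `qBinomZ`. -/
def quintupleTerm {K : Type*} [Field K] (q z : K) (n : ℕ) (k : ℤ) : K :=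
  (1 - z ^ 2 * q ^ (2 * k + 1)) * qBinomZ q n k *
    (qPoch q (z * q) n / qPoch q (z ^ 2 * q ^ (k + 1)) (n + 1)) * z ^ k * q ^ (k ^ 2)

lemma qPoch_zero {K : Type*} [Field K] (q x : K) : qPoch q x 0 = 1 := by simp [qPoch]
lemma qPoch_succ {K : Type*} [Field K] (q x : K) (n : ℕ) :
    qPoch q x (n+1) = qPoch q x n * (1 - x * q ^ n) := Finset.prod_range_succ _ _
lemma qPoch_succ' {K : Type*} [Field K] (q x : K) (n : ℕ) :
    qPoch q x (n+1) = (1 - x) * qPoch q (x * q) n := by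
  rw [qPoch, Finset.prod_range_succ']
  simp only [pow_zero, mul_one]
  rw [mul_comm, qPoch]
  congr 1
  refine Finset.prod_congr rfl fun i _ => ?_
  ring
lemma qPoch_ne_of_le {K : Type*} [Field K] {q x : K} {m n : ℕ} (hmn : m ≤ n)
    (h : qPoch q x n ≠ 0) : qPoch q x m ≠ 0 := by
  rw [qPoch, Finset.prod_ne_zero_iff] at h ⊢
  exact fun i hi => h i (Finset.mem_range.mpr (lt_of_lt_of_le (Finset.mem_range.mp hi) hmn))
lemma qPoch_factor_ne {K : Type*} [Field K] {q x : K} {n : ℕ} (h : qPoch q x n ≠ 0)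
    {j : ℕ} (hj : j < n) : 1 - x * q ^ j ≠ 0 := by
  rw [qPoch, Finset.prod_ne_zero_iff] at h
  exact h j (Finset.mem_range.mpr hj)
lemma qPoch_zsq_ne {K : Type*} [Field K] {q z : K}
    (hzz : ∀ j : ℤ, 1 - z ^ 2 * q ^ j ≠ 0) (t m : ℕ) :
    qPoch q (z ^ 2 * q ^ t) m ≠ 0 := by
  rw [qPoch, Finset.prod_ne_zero_iff]
  intro i _
  have := hzz ((t + i : ℕ) : ℤ)
  rw [zpow_natCast] at this
  rw [show z ^ 2 * q ^ t * q ^ i = z ^ 2 * q ^ (t + i) by rw [pow_add]; ring]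
  exact this
lemma one_sub_zsq_ne {K : Type*} [Field K] {q z : K}
    (hzz : ∀ j : ℤ, 1 - z ^ 2 * q ^ j ≠ 0) (t : ℕ) : 1 - z ^ 2 * q ^ t ≠ 0 := by
  have := hzz (t : ℤ); rwa [zpow_natCast] at this
lemma qBinomZ_nat {K : Type*} [Field K] (q : K) (n j : ℕ) (h : j ≤ n) :
    qBinomZ q n j = qPoch q q n / (qPoch q q j * qPoch q q (n - j)) := by
  rw [qBinomZ, if_pos ⟨Int.natCast_nonneg j, by exact_mod_cast h⟩]
  rw [← Nat.cast_sub h]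
  simp
lemma qBinomZ_zero {K : Type*} [Field K] (q : K) {N k : ℤ} (h : ¬(0 ≤ k ∧ k ≤ N)) :
    qBinomZ q N k = 0 := if_neg h
lemma quintupleTerm_zero {K : Type*} [Field K] (q z : K) (n : ℕ) {k : ℤ}
    (h : ¬(0 ≤ k ∧ k ≤ (n : ℤ))) : quintupleTerm q z n k = 0 := by
  rw [quintupleTerm, qBinomZ_zero q h]; ring
lemma quintupleTerm_nat {K : Type*} [Field K] (q z : K) (n j : ℕ) :
    quintupleTerm q z n (j : ℤ)
      = (1 - z ^ 2 * q ^ (2 * j + 1)) * qBinomZ q n j *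
        (qPoch q (z * q) n / qPoch q (z ^ 2 * q ^ (j + 1)) (n + 1)) * z ^ j * q ^ (j ^ 2) := by
  rw [quintupleTerm,
    show 2 * (j : ℤ) + 1 = ((2 * j + 1 : ℕ) : ℤ) by push_cast; ring,
    show (j : ℤ) + 1 = ((j + 1 : ℕ) : ℤ) by push_cast; ring,
    show (j : ℤ) ^ 2 = ((j ^ 2 : ℕ) : ℤ) by push_cast; ring,
    zpow_natCast, zpow_natCast, zpow_natCast, zpow_natCast]

lemma aux_left {K : Type*} [Field K] (q z : K) (m : ℕ) (hq : q ≠ 0) (hz : z ≠ 0)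
    (hqq : qPoch q q (m + 1) ≠ 0) (hzz : ∀ j : ℤ, 1 - z ^ 2 * q ^ j ≠ 0) :
    quintupleTerm q z (m + 1) ((0 : ℕ) : ℤ)
    = (1 - z * q ^ (m + 1)) / (1 - z ^ 2 * q ^ (m + 2)) * quintupleTerm q z m ((0 : ℕ) : ℤ) +
      (1 - z * q) * z * q ^ (m + 1) / (1 - z ^ 2 * q ^ (m + 2)) *
        quintupleTerm q (z * q) m (((0 : ℕ) : ℤ) - 1) := by
  have h2 : quintupleTerm q (z * q) m (((0 : ℕ) : ℤ) - 1) = 0 :=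
    quintupleTerm_zero _ _ _ (by omega)
  rw [h2, quintupleTerm_nat q z (m + 1) 0, quintupleTerm_nat q z m 0,
    qBinomZ_nat q (m + 1) 0 (by omega), qBinomZ_nat q m 0 (by omega)]
  have hPm1 : qPoch q q (m + 1) ≠ 0 := hqq
  have hPm : qPoch q q m ≠ 0 := qPoch_ne_of_le (by omega) hqq
  have hE : qPoch q (z ^ 2 * q ^ (0 + 1)) (m + 1) ≠ 0 := qPoch_zsq_ne hzz _ _
  have hden : (1 : K) - z ^ 2 * q ^ (m + 2) ≠ 0 := one_sub_zsq_ne hzz _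
  have h1 : (1 : K) - z ^ 2 * q ^ (0 + 1) * q ^ (m + 1) ≠ 0 := by
    rw [show z ^ 2 * q ^ (0 + 1) * q ^ (m + 1) = z ^ 2 * q ^ (0 + 1 + (m + 1)) by
      rw [pow_add]; ring]
    exact one_sub_zsq_ne hzz _
  rw [show qPoch q (z * q) (m + 1) = qPoch q (z * q) m * (1 - z * q * q ^ m) from
      qPoch_succ q _ m,
    show qPoch q (z ^ 2 * q ^ (0 + 1)) (m + 1 + 1)
        = qPoch q (z ^ 2 * q ^ (0 + 1)) (m + 1) * (1 - z ^ 2 * q ^ (0 + 1) * q ^ (m + 1)) from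
      qPoch_succ q _ (m + 1)]
  simp only [Nat.sub_zero, qPoch_zero, pow_zero, mul_one, one_mul]
  field_simp
  ring

lemma aux_right {K : Type*} [Field K] (q z : K) (m : ℕ) (hq : q ≠ 0) (hz : z ≠ 0)
    (hqq : qPoch q q (m + 1) ≠ 0) (hzz : ∀ j : ℤ, 1 - z ^ 2 * q ^ j ≠ 0) :
    quintupleTerm q z (m + 1) ((m + 1 : ℕ) : ℤ)
    = (1 - z * q ^ (m + 1)) / (1 - z ^ 2 * q ^ (m + 2)) * quintupleTerm q z m ((m + 1 : ℕ) : ℤ) +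
      (1 - z * q) * z * q ^ (m + 1) / (1 - z ^ 2 * q ^ (m + 2)) *
        quintupleTerm q (z * q) m (((m + 1 : ℕ) : ℤ) - 1) := by
  have h1 : quintupleTerm q z m ((m + 1 : ℕ) : ℤ) = 0 :=
    quintupleTerm_zero _ _ _ (by omega)
  have hcast : ((m + 1 : ℕ) : ℤ) - 1 = ((m : ℕ) : ℤ) := by push_cast; ring
  rw [h1, hcast, quintupleTerm_nat q z (m + 1) (m + 1), quintupleTerm_nat q (z * q) m m,
    qBinomZ_nat q (m + 1) (m + 1) le_rfl, qBinomZ_nat q m m le_rfl]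
  simp only [Nat.sub_self, qPoch_zero, mul_one]
  have hPm1 : qPoch q q (m + 1) ≠ 0 := hqq
  have hPm : qPoch q q m ≠ 0 := qPoch_ne_of_le (by omega) hqq
  have hden : (1 : K) - z ^ 2 * q ^ (m + 2) ≠ 0 := one_sub_zsq_ne hzz _
  rw [show qPoch q (z * q) (m + 1) = (1 - z * q) * qPoch q (z * q * q) m from
      qPoch_succ' q _ m,
    show qPoch q (z ^ 2 * q ^ (m + 1 + 1)) (m + 1 + 1)
        = (1 - z ^ 2 * q ^ (m + 1 + 1)) * qPoch q (z ^ 2 * q ^ (m + 1 + 1) * q) (m + 1) from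
      qPoch_succ' q _ (m + 1),
    show (z * q) ^ 2 * q ^ (m + 1) = z ^ 2 * q ^ (m + 1 + 1) * q by ring]
  have hx : (1 : K) - z ^ 2 * q ^ (m + 1 + 1) ≠ 0 := one_sub_zsq_ne hzz _
  have hE : qPoch q (z ^ 2 * q ^ (m + 1 + 1) * q) (m + 1) ≠ 0 := by
    rw [show z ^ 2 * q ^ (m + 1 + 1) * q = z ^ 2 * q ^ (m + 3) by ring]
    exact qPoch_zsq_ne hzz _ _
  field_simp
  ring

lemma mul_frac {K : Type*} [Field K] (A P Q R S s t : K) :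
    A * (P / Q) * (R / S) * s * t = A * P * R * s * t / (Q * S) := by
  ring

lemma frac_helper {K : Type*} [Field K] (NL DL c1 c2 d N1 D1 N2 D2 : K)
    (hDL : DL ≠ 0) (hd : d ≠ 0) (hD1 : D1 ≠ 0) (hD2 : D2 ≠ 0)
    (key : NL * (d * (D1 * D2)) = c1 * N1 * (DL * D2) + c2 * N2 * (DL * D1)) :
    NL / DL = c1 / d * (N1 / D1) + c2 / d * (N2 / D2) := by
  rw [div_mul_div_comm, div_mul_div_comm,
    div_add_div _ _ (mul_ne_zero hd hD1) (mul_ne_zero hd hD2),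
    div_eq_div_iff hDL (mul_ne_zero (mul_ne_zero hd hD1) (mul_ne_zero hd hD2))]
  linear_combination d * key

set_option maxHeartbeats 1600000 in
lemma aux_mid {K : Type*} [Field K] (q z : K) (i a : ℕ) (hq : q ≠ 0) (hz : z ≠ 0)
    (hqq : qPoch q q (i + 1 + a + 1) ≠ 0) (hzz : ∀ j : ℤ, 1 - z ^ 2 * q ^ j ≠ 0) :
    quintupleTerm q z (i + 1 + a + 1) ((i + 1 : ℕ) : ℤ)
    = (1 - z * q ^ (i + 1 + a + 1)) / (1 - z ^ 2 * q ^ (i + 1 + a + 2)) *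
        quintupleTerm q z (i + 1 + a) ((i + 1 : ℕ) : ℤ) +
      (1 - z * q) * z * q ^ (i + 1 + a + 1) / (1 - z ^ 2 * q ^ (i + 1 + a + 2)) *
        quintupleTerm q (z * q) (i + 1 + a) (((i + 1 : ℕ) : ℤ) - 1) := by
  have hcast : ((i + 1 : ℕ) : ℤ) - 1 = ((i : ℕ) : ℤ) := by push_cast; ring
  have eqPm1 : qPoch q q (i + 1 + a + 1) = qPoch q q (i + 1 + a) * (1 - q * q ^ (i + 1 + a)) := qPoch_succ q q _
  have eqPi1 : qPoch q q (i + 1) = qPoch q q i * (1 - q * q ^ i) := qPoch_succ q q i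
  have eqPa1 : qPoch q q (a + 1) = qPoch q q a * (1 - q * q ^ a) := qPoch_succ q q a
  have eqZ1 : qPoch q (z * q) (i + 1 + a) = (1 - z * q) * qPoch q (z * q * q) (i + a) := by
    rw [show i + 1 + a = (i + a) + 1 by ring]; exact qPoch_succ' q _ _
  have eqZ : qPoch q (z * q) (i + 1 + a + 1)
      = (1 - z * q) * qPoch q (z * q * q) (i + a) * (1 - z * q * q ^ (i + 1 + a)) := by
    rw [qPoch_succ, eqZ1]
  have eqZ2 : qPoch q (z * q * q) (i + 1 + a) = qPoch q (z * q * q) (i + a) * (1 - z * q * q * q ^ (i + a)) := by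
    rw [show i + 1 + a = (i + a) + 1 by ring]; exact qPoch_succ q _ _
  have eqD1 : qPoch q (z ^ 2 * q ^ (i + 1 + 1)) (i + 1 + a + 1)
      = (1 - z ^ 2 * q ^ (i + 1 + 1)) * qPoch q (z ^ 2 * q ^ (i + 3)) (i + 1 + a) := by
    rw [qPoch_succ', show z ^ 2 * q ^ (i + 1 + 1) * q = z ^ 2 * q ^ (i + 3) by ring]
  have eqD : qPoch q (z ^ 2 * q ^ (i + 1 + 1)) (i + 1 + a + 1 + 1)
      = (1 - z ^ 2 * q ^ (i + 1 + 1)) * qPoch q (z ^ 2 * q ^ (i + 3)) (i + 1 + a) * (1 - z ^ 2 * q ^ (2 * i + a + 4)) := by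
    rw [qPoch_succ, eqD1, show z ^ 2 * q ^ (i + 1 + 1) * q ^ (i + 1 + a + 1)
      = z ^ 2 * q ^ (2 * i + a + 4) by rw [show 2 * i + a + 4 = (i + 1 + 1) + (i + 1 + a + 1) by ring, pow_add]; ring]
  have eqD2 : qPoch q ((z * q) ^ 2 * q ^ (i + 1)) (i + 1 + a + 1)
      = qPoch q (z ^ 2 * q ^ (i + 3)) (i + 1 + a) * (1 - z ^ 2 * q ^ (2 * i + a + 4)) := by
    rw [show (z * q) ^ 2 * q ^ (i + 1) = z ^ 2 * q ^ (i + 3) by ring, qPoch_succ,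
      show z ^ 2 * q ^ (i + 3) * q ^ (i + 1 + a) = z ^ 2 * q ^ (2 * i + a + 4) by
        rw [show 2 * i + a + 4 = (i + 3) + (i + 1 + a) by ring, pow_add]; ring]
  have hL : quintupleTerm q z (i + 1 + a + 1) ((i + 1 : ℕ) : ℤ)
      = ((1 - z ^ 2 * q ^ (2 * (i + 1) + 1)) * (qPoch q q (i + 1 + a) * (1 - q * q ^ (i + 1 + a))) *
          ((1 - z * q) * qPoch q (z * q * q) (i + a) * (1 - z * q * q ^ (i + 1 + a))) * z ^ (i + 1) * q ^ ((i + 1) ^ 2)) /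
        (qPoch q q i * (1 - q * q ^ i) * (qPoch q q a * (1 - q * q ^ a)) *
          ((1 - z ^ 2 * q ^ (i + 1 + 1)) * qPoch q (z ^ 2 * q ^ (i + 3)) (i + 1 + a) * (1 - z ^ 2 * q ^ (2 * i + a + 4)))) := by
    rw [quintupleTerm_nat, qBinomZ_nat q _ _ (by omega),
      show i + 1 + a + 1 - (i + 1) = a + 1 by omega, eqPm1, eqPi1, eqPa1, eqZ, eqD]
    exact mul_frac _ _ _ _ _ _ _
  have h1 : quintupleTerm q z (i + 1 + a) ((i + 1 : ℕ) : ℤ)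
      = ((1 - z ^ 2 * q ^ (2 * (i + 1) + 1)) * qPoch q q (i + 1 + a) * ((1 - z * q) * qPoch q (z * q * q) (i + a)) * z ^ (i + 1) *
          q ^ ((i + 1) ^ 2)) /
        (qPoch q q i * (1 - q * q ^ i) * qPoch q q a * ((1 - z ^ 2 * q ^ (i + 1 + 1)) * qPoch q (z ^ 2 * q ^ (i + 3)) (i + 1 + a))) := by
    rw [quintupleTerm_nat, qBinomZ_nat q _ _ (by omega),
      show i + 1 + a - (i + 1) = a by omega, eqPi1, eqZ1, eqD1]
    exact mul_frac _ _ _ _ _ _ _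
  have h2 : quintupleTerm q (z * q) (i + 1 + a) ((i : ℕ) : ℤ)
      = ((1 - (z * q) ^ 2 * q ^ (2 * i + 1)) * qPoch q q (i + 1 + a) * (qPoch q (z * q * q) (i + a) * (1 - z * q * q * q ^ (i + a))) *
          (z * q) ^ i * q ^ (i ^ 2)) /
        (qPoch q q i * (qPoch q q a * (1 - q * q ^ a)) * (qPoch q (z ^ 2 * q ^ (i + 3)) (i + 1 + a) * (1 - z ^ 2 * q ^ (2 * i + a + 4)))) := by
    rw [quintupleTerm_nat, qBinomZ_nat q _ _ (by omega),
      show i + 1 + a - i = a + 1 by omega, eqPa1, eqZ2, eqD2]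
    exact mul_frac _ _ _ _ _ _ _
  rw [hcast, hL, h1, h2]
  have hPm : qPoch q q (i + 1 + a) ≠ 0 := qPoch_ne_of_le (by omega) hqq
  have hPi : qPoch q q i ≠ 0 := qPoch_ne_of_le (by omega) hqq
  have hPa : qPoch q q a ≠ 0 := qPoch_ne_of_le (by omega) hqq
  have hfi : (1 : K) - q * q ^ i ≠ 0 := qPoch_factor_ne hqq (by omega)
  have hfa : (1 : K) - q * q ^ a ≠ 0 := qPoch_factor_ne hqq (by omega)
  have hden : (1 : K) - z ^ 2 * q ^ (i + 1 + a + 2) ≠ 0 := one_sub_zsq_ne hzz _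
  have hx : (1 : K) - z ^ 2 * q ^ (i + 1 + 1) ≠ 0 := one_sub_zsq_ne hzz _
  have hy : (1 : K) - z ^ 2 * q ^ (2 * i + a + 4) ≠ 0 := one_sub_zsq_ne hzz _
  have hE : qPoch q (z ^ 2 * q ^ (i + 3)) (i + 1 + a) ≠ 0 := qPoch_zsq_ne hzz _ _
  exact frac_helper _ _ _ _ _ _ _ _ _
    (mul_ne_zero (mul_ne_zero (mul_ne_zero hPi hfi) (mul_ne_zero hPa hfa))
      (mul_ne_zero (mul_ne_zero hx hE) hy)) hden
    (mul_ne_zero (mul_ne_zero (mul_ne_zero hPi hfi) hPa) (mul_ne_zero hx hE))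
    (mul_ne_zero (mul_ne_zero hPi (mul_ne_zero hPa hfa)) (mul_ne_zero hE hy))
    (by ring)


/-- The recurrence for the summand of the finite quintuple product identity:
`F_{n,k}(z,q) = (1−zq^n)/(1−z²q^{n+1}) F_{n−1,k}(z,q)
  + (1−zq) z q^n/(1−z²q^{n+1}) F_{n−1,k−1}(zq,q)`. -/
theorem quintuple_term_rec {K : Type*} [Field K] (q z : K) (n : ℕ) (k : ℤ)
    (hn : 1 ≤ n) (hq : q ≠ 0) (hz : z ≠ 0) (hqq : qPoch q q n ≠ 0)
    (hzz : ∀ j : ℤ, 1 - z ^ 2 * q ^ j ≠ 0) :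
    quintupleTerm q z n k
    = (1 - z * q ^ (n : ℤ)) / (1 - z ^ 2 * q ^ ((n : ℤ) + 1)) * quintupleTerm q z (n - 1) k +
      (1 - z * q) * z * q ^ (n : ℤ) / (1 - z ^ 2 * q ^ ((n : ℤ) + 1)) *
        quintupleTerm q (z * q) (n - 1) (k - 1) := by
  obtain ⟨m, rfl⟩ : ∃ m, n = m + 1 := ⟨n - 1, by omega⟩
  simp only [Nat.add_sub_cancel]
  rw [show (((m + 1 : ℕ) : ℤ)) + 1 = ((m + 2 : ℕ) : ℤ) by push_cast; ring,
    zpow_natCast, zpow_natCast]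
  rcases lt_or_ge k 0 with hk | hk
  · have t0 : quintupleTerm q z (m + 1) k = 0 := quintupleTerm_zero _ _ _ (by omega)
    have t1 : quintupleTerm q z m k = 0 := quintupleTerm_zero _ _ _ (by omega)
    have t2 : quintupleTerm q (z * q) m (k - 1) = 0 := quintupleTerm_zero _ _ _ (by omega)
    rw [t0, t1, t2]; ring
  obtain ⟨j, rfl⟩ := Int.eq_ofNat_of_zero_le hk
  rcases Nat.lt_or_ge (m + 1) j with hj | hj
  · have t0 : quintupleTerm q z (m + 1) ((j : ℕ) : ℤ) = 0 :=
      quintupleTerm_zero _ _ _ (by omega)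
    have t1 : quintupleTerm q z m ((j : ℕ) : ℤ) = 0 := quintupleTerm_zero _ _ _ (by omega)
    have t2 : quintupleTerm q (z * q) m (((j : ℕ) : ℤ) - 1) = 0 :=
      quintupleTerm_zero _ _ _ (by omega)
    rw [t0, t1, t2]; ring
  rcases Nat.eq_zero_or_pos j with rfl | hj1
  · exact aux_left q z m hq hz hqq hzz
  obtain ⟨i, rfl⟩ : ∃ i, j = i + 1 := ⟨j - 1, by omega⟩
  rcases eq_or_lt_of_le (by omega : i + 1 ≤ m + 1) with he | hlt
  · obtain rfl : i = m := by omega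
    exact aux_right q z _ hq hz hqq hzz
  obtain ⟨a, rfl⟩ : ∃ a, m = i + 1 + a := ⟨m - i - 1, by omega⟩
  exact aux_mid q z i a hq hz hqq hzz
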